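/- Let k ≥ 2 and let P_π be a weighted poset on {1,…,2^k}. If the extended binary Hamming code H̃_k is a 2-perfect P_π-code, then every element of P_π has P_π-weight at most 2; that is, for every i ∈ {1,…,2^k}, the weight of the order ideal generated by i satisfies Σ_{j ⪯ i} π(j) ≤ 2. -/

import Mathlib

open Classical

noncomputable def wtP {α : Type*} [Fintype α] (le : α → α → Prop) (π : α → ℕ)
    (x : α → ZMod 2) : ℕ :=
  ∑ j ∈ Finset.univ.filter (fun j => ∃ i, x i ≠ 0 ∧ le j i), π j

noncomputable def dP {α : Type*} [Fintype α] (le : α → α → Prop) (π : α → ℕ)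
    (x y : α → ZMod 2) : ℕ :=
  wtP le π (x - y)

def IsCovering {β : Type*} (d : β → β → ℕ) (C : Set β) (r : ℕ) : Prop :=
  ∀ x, ∃ c ∈ C, d c x ≤ r

def IsPacking {β : Type*} (d : β → β → ℕ) (C : Set β) (r : ℕ) : Prop :=
  ∀ c₁ ∈ C, ∀ c₂ ∈ C, c₁ ≠ c₂ → ∀ x, ¬(d c₁ x ≤ r ∧ d c₂ x ≤ r)

def extHamming (k : ℕ) : Set (Fin (2 ^ k) → ZMod 2) :=
  {x | (∑ i, x i) = 0 ∧
    ∀ j < k, (∑ i ∈ Finset.univ.filter (fun i : Fin (2 ^ k) => Nat.testBit i.val j), x i) = 0}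

lemma zmod2_eq_one {x : ZMod 2} (h : x ≠ 0) : x = 1 := by revert x; decide

lemma sum_eq_card {n : ℕ} (c : Fin n → ZMod 2) (t : Finset (Fin n)) :
    (∑ i ∈ t, c i) = ((t.filter (fun j => c j ≠ 0)).card : ZMod 2) := by
  rw [← Finset.sum_filter_ne_zero]
  rw [Finset.sum_congr rfl (fun j hj => zmod2_eq_one (Finset.mem_filter.mp hj).2)]
  simp

lemma ham_min {k : ℕ} (c : Fin (2 ^ k) → ZMod 2) (hc : c ∈ extHamming k)
    (h3 : (Finset.univ.filter (fun j => c j ≠ 0)).card ≤ 3) : c = 0 := by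
  obtain ⟨h0, hbits⟩ := hc
  set s := Finset.univ.filter (fun j => c j ≠ 0) with hs
  have hpar : 2 ∣ s.card := by
    rw [← ZMod.natCast_eq_zero_iff, ← sum_eq_card c Finset.univ] ; exact h0
  have hcases : s.card = 0 ∨ s.card = 2 := by omega
  rcases hcases with h | h
  · have : s = ∅ := Finset.card_eq_zero.mp h
    funext j
    simp only [Pi.zero_apply]
    by_contra hj
    have : j ∈ s := by simp [hs, hj]
    simp [‹s = ∅›] at this
  · exfalso
    obtain ⟨a, b, hab, hsab⟩ := Finset.card_eq_two.mp h
    have habv : a.val = b.val := by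
      apply Nat.eq_of_testBit_eq
      intro j
      by_cases hjk : j < k
      · have hb := hbits j hjk
        rw [sum_eq_card] at hb
        have hdvd : 2 ∣ ((Finset.univ.filter (fun i : Fin (2 ^ k) => Nat.testBit i.val j)).filter
            (fun i => c i ≠ 0)).card := by
          rwa [ZMod.natCast_eq_zero_iff] at hb
        have hset : (Finset.univ.filter (fun i : Fin (2 ^ k) => Nat.testBit i.val j)).filter
            (fun i => c i ≠ 0) = s.filter (fun i => Nat.testBit i.val j) := by
          rw [Finset.filter_filter, hs, Finset.filter_filter]
          exact Finset.filter_congr (fun x _ => and_comm)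
        rw [hset, hsab] at hdvd
        by_cases ha : Nat.testBit a.val j <;> by_cases hbb : Nat.testBit b.val j <;>
          simp [ha, hbb, Finset.filter_insert, Finset.filter_singleton, hab] at hdvd ⊢
      · have h2 : a.val < 2 ^ j := lt_of_lt_of_le a.isLt (Nat.pow_le_pow_right (by norm_num) (le_of_not_gt hjk))
        have h2' : b.val < 2 ^ j := lt_of_lt_of_le b.isLt (Nat.pow_le_pow_right (by norm_num) (le_of_not_gt hjk))
        rw [Nat.testBit_lt_two_pow h2, Nat.testBit_lt_two_pow h2']
    exact hab (Fin.ext habv)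

theorem stmt_11 {k : ℕ} (hk : 2 ≤ k)
    (le : Fin (2 ^ k) → Fin (2 ^ k) → Prop)
    (hrefl : ∀ i, le i i)
    (hantisymm : ∀ i j, le i j → le j i → i = j)
    (htrans : ∀ i j l, le i j → le j l → le i l)
    (π : Fin (2 ^ k) → ℕ) (hπ : ∀ i, 0 < π i)
    (hperf : IsCovering (dP le π) (extHamming k) 2 ∧
      IsPacking (dP le π) (extHamming k) 2) :
    ∀ i : Fin (2 ^ k), (∑ j ∈ Finset.univ.filter (fun j => le j i), π j) ≤ 2 := by
  intro i
  set e : Fin (2 ^ k) → ZMod 2 := fun j => if j = i then 1 else 0 with he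
  obtain ⟨c, hc, hd⟩ := hperf.1 e
  -- The support of a vector is contained in its ideal, so card of support ≤ wtP
  have hcard_le : ∀ x : Fin (2 ^ k) → ZMod 2,
      (Finset.univ.filter (fun j => x j ≠ 0)).card ≤ wtP le π x := by
    intro x
    calc (Finset.univ.filter (fun j => x j ≠ 0)).card
        ≤ (Finset.univ.filter (fun j => ∃ i', x i' ≠ 0 ∧ le j i')).card := by
          apply Finset.card_le_card
          intro j hj
          simp only [Finset.mem_filter, Finset.mem_univ, true_and] at hj ⊢
          exact ⟨j, hj, hrefl j⟩
      _ ≤ wtP le π x := by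
          unfold wtP
          rw [Finset.card_eq_sum_ones]
          convert Finset.sum_le_sum (fun j (_ : j ∈ Finset.univ.filter (fun j => ∃ i', x i' ≠ 0 ∧ le j i')) => show 1 ≤ π j from hπ j)
          rfl
  have hc0 : c = 0 := by
    apply ham_min c hc
    -- supp c ⊆ supp (c - e) ∪ {i}
    have hsub : Finset.univ.filter (fun j => c j ≠ 0) ⊆
        insert i (Finset.univ.filter (fun j => (c - e) j ≠ 0)) := by
      intro j hj
      simp only [Finset.mem_filter, Finset.mem_univ, true_and, Finset.mem_insert] at hj ⊢
      by_cases hji : j = i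
      · exact Or.inl hji
      · refine Or.inr ?_
        simp only [Pi.sub_apply, he]
        simp [hji, hj]
    have h1 : (Finset.univ.filter (fun j => (c - e) j ≠ 0)).card ≤ 2 :=
      le_trans (hcard_le (c - e)) hd
    calc (Finset.univ.filter (fun j => c j ≠ 0)).card
        ≤ (insert i (Finset.univ.filter (fun j => (c - e) j ≠ 0))).card :=
          Finset.card_le_card hsub
      _ ≤ (Finset.univ.filter (fun j => (c - e) j ≠ 0)).card + 1 := Finset.card_insert_le _ _
      _ ≤ 3 := by omega
  rw [hc0] at hd
  have heq : dP le π 0 e = ∑ j ∈ Finset.univ.filter (fun j => le j i), π j := by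
    unfold dP wtP
    congr 1
    convert Finset.filter_congr (s := Finset.univ) (p := fun j => ∃ i', (0 - e) i' ≠ 0 ∧ le j i') (q := fun j => le j i) ?_
    intro j _
    simp only [zero_sub, Pi.neg_apply, ne_eq, neg_eq_zero, he]
    constructor
    · rintro ⟨i', hi', hle⟩
      by_cases hii : i' = i
      · rwa [hii] at hle
      · simp [hii] at hi'
    · intro hle
      exact ⟨i, by simp, hle⟩
  rw [heq] at hd
  exact hd
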